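/- Let M = [[1,2],[1,3]] ∈ SL₂(ℤ). Let G be a group fitting in an extension 1 → ℤ² → G → ℤ → 1 such that the induced action of the generator of ℤ on ℤ² is given by M (so n ∈ ℤ acts by Mⁿ). Then G is not virtually nilpotent: no finite-index subgroup of G is nilpotent. -/

import Mathlib

open Matrix
open scoped commutatorElement

lemma aux_trace_pow (B : Matrix (Fin 2) (Fin 2) ℤ)
    (hB : B * B + 1 = (4 : ℤ) • B) (ht : B.trace = 4) :
    ∀ k : ℕ, 2 ≤ (B ^ k).trace ∧ (B ^ k).trace + 2 ≤ (B ^ (k+1)).trace := by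
  intro k
  induction k with
  | zero => simp [ht]
  | succ k ih =>
    obtain ⟨h1, h2⟩ := ih
    have hrec : (B ^ (k+2)).trace = (4:ℤ) * (B ^ (k+1)).trace - (B ^ k).trace := by
      have hm : B ^ (k+2) = (4:ℤ) • B ^ (k+1) - B ^ k := by
        have h3 : B ^ (k+2) = B ^ k * (B * B) := by
          rw [pow_add, pow_two]
        have h4 : B * B = (4:ℤ) • B - 1 := by
          rw [← hB, add_sub_cancel_right]
        rw [h3, h4, mul_sub, mul_smul_comm, mul_one, ← pow_succ]
      rw [hm, Matrix.trace_sub, Matrix.trace_smul]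
      simp
    refine ⟨by linarith, ?_⟩
    rw [hrec]; linarith

lemma aux_trace_pow_gt (B : Matrix (Fin 2) (Fin 2) ℤ)
    (hB : B * B + 1 = (4 : ℤ) • B) (ht : B.trace = 4) {m : ℕ} (hm : 1 ≤ m) :
    2 < (B ^ m).trace := by
  obtain ⟨k, rfl⟩ := Nat.exists_eq_add_of_le hm
  obtain ⟨h1, h2⟩ := aux_trace_pow B hB ht k
  rw [add_comm 1 k]
  linarith

lemma aux_det_one_sub (B : Matrix (Fin 2) (Fin 2) ℤ) :
    (1 - B).det = 1 - B.trace + B.det := by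
  simp [Matrix.det_fin_two, Matrix.trace_fin_two, Matrix.sub_apply, Matrix.one_apply]
  ring

lemma aux_mulVec_ne_zero (B : Matrix (Fin 2) (Fin 2) ℤ) (hdet : B.det ≠ 0)
    (u : Fin 2 → ℤ) (hu : u ≠ 0) : B.mulVec u ≠ 0 := by
  intro h0
  apply hu
  have h1 : B.adjugate.mulVec (B.mulVec u) = 0 := by rw [h0, Matrix.mulVec_zero]
  rw [Matrix.mulVec_mulVec, Matrix.adjugate_mul, Matrix.smul_mulVec,
    Matrix.one_mulVec] at h1
  exact (smul_eq_zero.mp h1).resolve_left hdet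

/- **Statement 9.** Let `M = [[1,2],[1,3]] ∈ SL₂(ℤ)` and let `G` be a group fitting in an
extension `1 → ℤ² → G → ℤ → 1` such that the conjugation action of an element of `G`
mapping to `n ∈ ℤ` on `ℤ²` is given by `Mⁿ`. Then `G` is not virtually nilpotent: no
finite-index subgroup of `G` is nilpotent. -/
theorem extension_by_M_not_virtually_nilpotent (Mu : (Matrix (Fin 2) (Fin 2) ℤ)ˣ)
    (hM : (Mu : Matrix (Fin 2) (Fin 2) ℤ) = !![1, 2; 1, 3])
    (G : Type*) [Group G]
    (p : G →* Multiplicative ℤ) (hp : Function.Surjective p)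
    (i : Multiplicative (Fin 2 → ℤ) →* G) (hi : Function.Injective i)
    (hexact : MonoidHom.range i = MonoidHom.ker p)
    (hact : ∀ (g : G) (v : Multiplicative (Fin 2 → ℤ)),
      g * i v * g⁻¹ = i (Multiplicative.ofAdd
        (((Mu ^ (Multiplicative.toAdd (p g)) : (Matrix (Fin 2) (Fin 2) ℤ)ˣ)
            : Matrix (Fin 2) (Fin 2) ℤ).mulVec (Multiplicative.toAdd v)))) :
    ¬ ∃ H : Subgroup G, H.FiniteIndex ∧ Group.IsNilpotent ↥H := by
  rintro ⟨H, hfin, hnil⟩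
  -- the inverse matrix of M
  have hMN : (!![1,2;1,3] : Matrix (Fin 2) (Fin 2) ℤ) * !![3,-2;-1,1] = 1 := by
    ext i j
    fin_cases i <;> fin_cases j <;>
      simp [Matrix.mul_apply, Fin.sum_univ_two, Matrix.one_apply]
  have hMuinv : ((Mu⁻¹ : (Matrix (Fin 2) (Fin 2) ℤ)ˣ) : Matrix (Fin 2) (Fin 2) ℤ)
      = !![3,-2;-1,1] := by
    calc ((Mu⁻¹ : (Matrix (Fin 2) (Fin 2) ℤ)ˣ) : Matrix (Fin 2) (Fin 2) ℤ)
        = ((Mu⁻¹ : (Matrix (Fin 2) (Fin 2) ℤ)ˣ) : Matrix (Fin 2) (Fin 2) ℤ)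
          * ((!![1,2;1,3] : Matrix (Fin 2) (Fin 2) ℤ) * !![3,-2;-1,1]) := by
          rw [hMN, mul_one]
      _ = (((Mu⁻¹ : (Matrix (Fin 2) (Fin 2) ℤ)ˣ) : Matrix (Fin 2) (Fin 2) ℤ)
          * (Mu : Matrix (Fin 2) (Fin 2) ℤ)) * !![3,-2;-1,1] := by
          rw [hM, mul_assoc]
      _ = !![3,-2;-1,1] := by
          rw [← Units.val_mul, inv_mul_cancel, Units.val_one, one_mul]
  -- the key determinant fact
  have hkey : ∀ n : ℤ, n ≠ 0 →
      (1 - ((Mu ^ n : (Matrix (Fin 2) (Fin 2) ℤ)ˣ) : Matrix (Fin 2) (Fin 2) ℤ)).det ≠ 0 := by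
    intro n hn
    obtain ⟨B, m, hm, hBval, hB, ht, hdet⟩ :
        ∃ (B : Matrix (Fin 2) (Fin 2) ℤ) (m : ℕ), 1 ≤ m ∧
          ((Mu ^ n : (Matrix (Fin 2) (Fin 2) ℤ)ˣ) : Matrix (Fin 2) (Fin 2) ℤ) = B ^ m ∧
          B * B + 1 = (4:ℤ) • B ∧ B.trace = 4 ∧ B.det = 1 := by
      rcases hn.lt_or_gt with hneg | hpos
      · refine ⟨!![3,-2;-1,1], n.natAbs, ?_, ?_, ?_, ?_, ?_⟩
        · omega
        · have h1 : Mu ^ n = (Mu⁻¹) ^ n.natAbs := by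
            have h0 : n = -(n.natAbs : ℤ) := by omega
            conv_lhs => rw [h0]
            rw [_root_.zpow_neg, zpow_natCast, inv_pow]
          rw [h1, Units.val_pow_eq_pow_val, hMuinv]
        · ext i j
          fin_cases i <;> fin_cases j <;>
            simp [Matrix.mul_apply, Fin.sum_univ_two, Matrix.one_apply]
        · simp [Matrix.trace_fin_two]
        · simp [Matrix.det_fin_two]
      · refine ⟨!![1,2;1,3], n.toNat, ?_, ?_, ?_, ?_, ?_⟩
        · omega
        · have h1 : Mu ^ n = Mu ^ n.toNat := by
            rw [← zpow_natCast]
            congr 1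
            omega
          rw [h1, Units.val_pow_eq_pow_val, hM]
        · ext i j
          fin_cases i <;> fin_cases j <;>
            simp [Matrix.mul_apply, Fin.sum_univ_two, Matrix.one_apply]
        · simp [Matrix.trace_fin_two]
        · simp [Matrix.det_fin_two]
    rw [hBval, aux_det_one_sub, Matrix.det_pow, hdet, one_pow]
    have := aux_trace_pow_gt B hB ht hm
    intro hcon
    linarith
  -- an element of H with nonzero image in ℤ
  obtain ⟨x, hx⟩ := hp (Multiplicative.ofAdd 1)
  obtain ⟨k₁, hk₁pos, -, hk₁⟩ :=
    Subgroup.exists_pow_mem_of_index_ne_zero hfin.index_ne_zero x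
  set g : G := x ^ k₁ with hgdef
  have hg : g ∈ H := hk₁
  have hpg : Multiplicative.toAdd (p g) = (k₁ : ℤ) := by
    rw [hgdef, map_pow, hx]
    simp
  have hpgne : Multiplicative.toAdd (p g) ≠ 0 := by
    rw [hpg]
    exact_mod_cast hk₁pos.ne'
  -- a nonzero element of ℤ² landing in H
  set e : Multiplicative (Fin 2 → ℤ) := Multiplicative.ofAdd (Pi.single 0 1) with hedef
  obtain ⟨k₂, hk₂pos, -, hk₂⟩ :=
    Subgroup.exists_pow_mem_of_index_ne_zero hfin.index_ne_zero (i e)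
  set w₀ : Fin 2 → ℤ := k₂ • (Pi.single 0 1 : Fin 2 → ℤ) with hw₀def
  have hw₀mem : i (Multiplicative.ofAdd w₀) ∈ H := by
    have h1 : Multiplicative.ofAdd w₀ = e ^ k₂ := by
      rw [hedef, hw₀def, ofAdd_nsmul]
    rw [h1, map_pow]
    exact hk₂
  have hw₀ne : w₀ ≠ 0 := by
    intro h0
    have h1 : w₀ 0 = 0 := by rw [h0]; rfl
    rw [hw₀def] at h1
    simp [Pi.single_eq_same] at h1
    omega
  -- the matrix A = M ^ (p g)
  set A : Matrix (Fin 2) (Fin 2) ℤ :=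
    ((Mu ^ (Multiplicative.toAdd (p g)) : (Matrix (Fin 2) (Fin 2) ℤ)ˣ)
      : Matrix (Fin 2) (Fin 2) ℤ) with hAdef
  have hdetA : (1 - A).det ≠ 0 := hkey _ hpgne
  -- the sequence of iterated commutator vectors
  set w : ℕ → (Fin 2 → ℤ) := fun k => ((1 - A) ^ k).mulVec w₀ with hwdef
  have hw0 : w 0 = w₀ := by
    show ((1 - A) ^ 0).mulVec w₀ = w₀
    rw [pow_zero, Matrix.one_mulVec]
  have hwsucc : ∀ k, w (k + 1) = w k - A.mulVec (w k) := by
    intro k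
    have h1 : w (k+1) = (1 - A).mulVec (w k) := by
      rw [hwdef]
      simp only []
      rw [Matrix.mulVec_mulVec, ← pow_succ']
    rw [h1, Matrix.sub_mulVec, Matrix.one_mulVec]
  have hwne : ∀ k, w k ≠ 0 := by
    intro k
    induction k with
    | zero => rw [hw0]; exact hw₀ne
    | succ k ih =>
      have h1 : w (k+1) = (1 - A).mulVec (w k) := by
        rw [hwsucc, Matrix.sub_mulVec, Matrix.one_mulVec]
      rw [h1]
      exact aux_mulVec_ne_zero _ hdetA _ ih
  -- the iterated commutators lie in the lower central series of H
  have hser : ∀ k, ∃ hmem : i (Multiplicative.ofAdd (w k)) ∈ H,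
      (⟨i (Multiplicative.ofAdd (w k)), hmem⟩ : H) ∈ Subgroup.lowerCentralSeries (⊤ : Subgroup ↥H) k := by
    intro k
    induction k with
    | zero =>
      refine ⟨by rw [hw0]; exact hw₀mem, Subgroup.mem_top _⟩
    | succ k ih =>
      obtain ⟨hmem, hlcs⟩ := ih
      set a : H := ⟨i (Multiplicative.ofAdd (w k)), hmem⟩ with hadef
      set b : H := ⟨g, hg⟩ with hbdef
      have hcval : ((⁅a, b⁆ : H) : G) = i (Multiplicative.ofAdd (w (k+1))) := by
        have h2 : g * (i (Multiplicative.ofAdd (w k)))⁻¹ * g⁻¹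
            = i (Multiplicative.ofAdd (-(A.mulVec (w k)))) := by
          rw [← map_inv]
          rw [hact g ((Multiplicative.ofAdd (w k))⁻¹)]
          congr 1
          rw [← hAdef]
          congr 1
          simp [Matrix.mulVec_neg]
        have h3 : ((⁅a, b⁆ : H) : G)
            = i (Multiplicative.ofAdd (w k)) * (g * (i (Multiplicative.ofAdd (w k)))⁻¹ * g⁻¹) := by
          show i (Multiplicative.ofAdd (w k)) * g * (i (Multiplicative.ofAdd (w k)))⁻¹ * g⁻¹ = _
          group
        rw [h3, h2, ← _root_.map_mul, ← ofAdd_add, hwsucc k, sub_eq_add_neg]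
      refine ⟨by rw [← hcval]; exact (⁅a, b⁆ : H).2, ?_⟩
      have h4 : (⟨i (Multiplicative.ofAdd (w (k+1))), by rw [← hcval]; exact (⁅a, b⁆ : H).2⟩ : H)
          = ⁅a, b⁆ := by
        ext
        exact hcval.symm
      rw [h4, Subgroup.lowerCentralSeries_succ]
      exact Subgroup.commutator_mem_commutator hlcs (Subgroup.mem_top _)
  -- conclude
  obtain ⟨c, hc⟩ := Subgroup.nilpotent_iff_lowerCentralSeries.mp hnil
  obtain ⟨hmem, hlcs⟩ := hser c
  rw [hc, Subgroup.mem_bot] at hlcs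
  have h5 : i (Multiplicative.ofAdd (w c)) = i 1 := by
    have := congrArg (Subtype.val) hlcs
    simpa using this
  have h6 : Multiplicative.ofAdd (w c) = 1 := hi h5
  exact hwne c (by simpa using h6)
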